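/- Let P = (1/2)P₁ + (1/2)P₂ where P₁ is uniform on [0, 1/2] and P₂ is the uniform discrete measure on D = {2/3, 5/6, 1}. For every n ≥ 5, the set α_{n−3}(P₁) ∪ D, where α_{n−3}(P₁) = {(2i−1)/(4(n−3)) : 1 ≤ i ≤ n−3} is the optimal set of (n−3)-means for P₁, is an optimal set of n-means for P, and V_n(P) = (1/2)V_{n−3}(P₁) = 1/(96(n−3)²). -/

import Mathlib

open MeasureTheory Set Filter Real
open scoped ENNReal

/-- Distortion error of a finite set of quantizers `γ` for the measure `P`. -/
noncomputable def distortion (P : Measure ℝ) (γ : Finset ℝ) : ℝ :=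
  ∫ x, (⨅ c : γ, (x - (c : ℝ)) ^ 2) ∂P

/-- The `n`-th quantization error of `P`. -/
noncomputable def quantErr (P : Measure ℝ) (n : ℕ) : ℝ :=
  sInf {v : ℝ | ∃ γ : Finset ℝ, γ.Nonempty ∧ γ.card ≤ n ∧ v = distortion P γ}

/-- `γ` is an optimal set of `n`-means for `P`. -/
def IsOptimalSet (P : Measure ℝ) (n : ℕ) (γ : Finset ℝ) : Prop :=
  γ.Nonempty ∧ γ.card ≤ n ∧ distortion P γ = quantErr P n

/-- Uniform distribution on `[a, b]`. -/
noncomputable def unif (a b : ℝ) : Measure ℝ :=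
  (ENNReal.ofReal (b - a))⁻¹ • (volume.restrict (Icc a b))

/-- The uniform discrete measure on `{2/3, 5/6, 1}`. -/
noncomputable def discD : Measure ℝ :=
  (3 : ℝ≥0∞)⁻¹ • (Measure.dirac (2/3) + Measure.dirac (5/6) + Measure.dirac 1)

/-- Mixture `(1/2)P₁ + (1/2)P₂`. -/
noncomputable def mix (P₁ P₂ : Measure ℝ) : Measure ℝ :=
  (2 : ℝ≥0∞)⁻¹ • P₁ + (2 : ℝ≥0∞)⁻¹ • P₂

noncomputable def fE (γ : Finset ℝ) (x : ℝ) : ℝ := ⨅ c : γ, (x - (c : ℝ)) ^ 2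

lemma fE_eq_inf' (γ : Finset ℝ) (hγ : γ.Nonempty) (x : ℝ) :
    fE γ x = γ.inf' hγ (fun c => (x - c) ^ 2) := by
  rw [Finset.inf'_eq_csInf_image]
  unfold fE
  rw [iInf]
  congr 1
  ext v
  simp [Set.range, Finset.mem_coe]

lemma fE_nonneg (γ : Finset ℝ) (x : ℝ) : 0 ≤ fE γ x := by
  rcases γ.eq_empty_or_nonempty with h | h
  · subst h
    simp [fE, iInf, Set.range_eq_empty, Real.sInf_empty]
  · rw [fE_eq_inf' γ h]
    obtain ⟨c, hc, hmin⟩ := Finset.exists_mem_eq_inf' h (fun c => (x - c) ^ 2)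
    rw [hmin]; positivity

lemma fE_le (γ : Finset ℝ) (hγ : γ.Nonempty) {c : ℝ} (hc : c ∈ γ) (x : ℝ) :
    fE γ x ≤ (x - c) ^ 2 := by
  rw [fE_eq_inf' γ hγ]
  exact Finset.inf'_le _ hc

lemma fE_exists (γ : Finset ℝ) (hγ : γ.Nonempty) (x : ℝ) :
    ∃ c ∈ γ, fE γ x = (x - c) ^ 2 := by
  rw [fE_eq_inf' γ hγ]
  obtain ⟨c, hc, hmin⟩ := Finset.exists_mem_eq_inf' hγ (fun c => (x - c) ^ 2)
  exact ⟨c, hc, hmin⟩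

lemma fE_cont (γ : Finset ℝ) (hγ : γ.Nonempty) : Continuous (fE γ) := by
  have : ∀ (s : Finset ℝ) (hs : s.Nonempty),
      Continuous (fun x => s.inf' hs (fun c => (x - c) ^ 2)) := by
    intro s hs
    induction hs using Finset.Nonempty.cons_induction with
    | singleton a => simp only [Finset.inf'_singleton]; exact (continuous_id.sub continuous_const).pow 2
    | cons a s ha hs ih =>
        have : (fun x => (Finset.cons a s ha).inf' (Finset.cons_nonempty ha)
            (fun c => (x - c) ^ 2)) = fun x =>
            min ((x - a) ^ 2) (s.inf' hs (fun c => (x - c) ^ 2)) := by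
          ext x; rw [Finset.inf'_cons]
        rw [this]
        exact Continuous.min ((continuous_id.sub continuous_const).pow 2) ih
  have h := this γ hγ
  have : fE γ = fun x => γ.inf' hγ (fun c => (x - c) ^ 2) := by
    ext x; exact fE_eq_inf' γ hγ x
  rw [this]; exact h

lemma fE_sublevel (γ : Finset ℝ) (hγ : γ.Nonempty) (s : ℝ) :
    {x : ℝ | fE γ x ≤ s} ⊆ ⋃ c ∈ γ, Icc (c - Real.sqrt s) (c + Real.sqrt s) := by
  intro x hx
  obtain ⟨c, hc, he⟩ := fE_exists γ hγ x
  simp only [Set.mem_setOf_eq] at hx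
  rw [he] at hx
  have habs : |x - c| ≤ Real.sqrt s := by
    rw [← Real.sqrt_sq_eq_abs]
    exact Real.sqrt_le_sqrt (by linarith [sq_abs (x-c)])
  rw [abs_le] at habs
  exact Set.mem_biUnion hc ⟨by linarith [habs.1], by linarith [habs.2]⟩


lemma distortion_eq (P : Measure ℝ) (γ : Finset ℝ) : distortion P γ = ∫ x, fE γ x ∂P := rfl

lemma integrable_fE_unif (γ : Finset ℝ) (hγ : γ.Nonempty) : Integrable (fE γ) (unif 0 (1/2)) := by
  unfold unif
  refine Integrable.smul_measure ?_ (by simp)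
  exact ((fE_cont γ hγ).integrableOn_Icc)

lemma integrable_fE_dirac (γ : Finset ℝ) (hγ : γ.Nonempty) (a : ℝ) :
    Integrable (fE γ) (Measure.dirac a) := by
  constructor
  · exact (fE_cont γ hγ).aestronglyMeasurable
  · simp [HasFiniteIntegral, lintegral_dirac]

lemma integrable_fE_discD (γ : Finset ℝ) (hγ : γ.Nonempty) : Integrable (fE γ) discD := by
  unfold discD
  refine Integrable.smul_measure ?_ (by simp)
  exact ((integrable_fE_dirac γ hγ _).add_measure (integrable_fE_dirac γ hγ _)).add_measure
    (integrable_fE_dirac γ hγ _)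

lemma distortion_unif (γ : Finset ℝ) (hγ : γ.Nonempty) :
    distortion (unif 0 (1/2)) γ = 2 * ∫ x in Icc (0:ℝ) (1/2), fE γ x := by
  rw [distortion_eq]
  unfold unif
  rw [integral_smul_measure]
  norm_num [ENNReal.toReal_inv]

lemma distortion_mix (γ : Finset ℝ) (hγ : γ.Nonempty) :
    distortion (mix (unif 0 (1/2)) discD) γ =
      (∫ x in Icc (0:ℝ) (1/2), fE γ x) + (1/6) * (fE γ (2/3) + fE γ (5/6) + fE γ 1) := by
  rw [distortion_eq]
  unfold mix
  rw [integral_add_measure ((integrable_fE_unif γ hγ).smul_measure (by simp))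
      ((integrable_fE_discD γ hγ).smul_measure (by simp))]
  rw [integral_smul_measure, integral_smul_measure]
  have h1 : ∫ x, fE γ x ∂(unif 0 (1/2)) = 2 * ∫ x in Icc (0:ℝ) (1/2), fE γ x := by
    rw [← distortion_eq]; exact distortion_unif γ hγ
  rw [h1]
  have h2 : ∫ x, fE γ x ∂discD = (1/3) * (fE γ (2/3) + fE γ (5/6) + fE γ 1) := by
    unfold discD
    rw [integral_smul_measure]
    rw [integral_add_measure, integral_add_measure]
    · rw [integral_dirac, integral_dirac, integral_dirac]
      norm_num [ENNReal.toReal_inv]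
    all_goals
      first
        | exact (integrable_fE_dirac γ hγ _).add_measure (integrable_fE_dirac γ hγ _)
        | exact integrable_fE_dirac γ hγ _
  rw [h2]
  norm_num [ENNReal.toReal_inv]
  ring

lemma sqrtint {C S : ℝ} (hS : 0 < S) :
    ∫ t in Ioc (0:ℝ) (S^2), (1/2 - C * Real.sqrt t) = S^2/2 - (2*C/3)*S^3 := by
  rw [← intervalIntegral.integral_of_le (by positivity : (0:ℝ) ≤ S^2)]
  have hsub : ∀ x ∈ uIcc (0:ℝ) S, HasDerivAt (fun u : ℝ => u^2) (2*x) x := by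
    intro x _
    simpa using (hasDerivAt_pow 2 x)
  have hcomp := intervalIntegral.integral_comp_smul_deriv hsub
    (by fun_prop : ContinuousOn (fun x : ℝ => 2*x) (uIcc 0 S))
    (by continuity : Continuous (fun t : ℝ => 1/2 - C * Real.sqrt t))
  have h0 : ((0:ℝ))^2 = 0 := by norm_num
  rw [h0] at hcomp
  rw [← hcomp]
  have hcg : ∀ x ∈ uIcc (0:ℝ) S, (2*x) • ((fun t => 1/2 - C * Real.sqrt t) ∘ (fun u => u^2)) x
      = x - 2*C*x^2 := by
    intro x hx
    have hx0 : 0 ≤ x := by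
      rcases hx with ⟨h1, _⟩
      simpa [hS.le] using h1
    simp only [Function.comp, smul_eq_mul]
    rw [Real.sqrt_sq hx0]
    ring
  rw [intervalIntegral.integral_congr hcg]
  rw [intervalIntegral.integral_sub (Continuous.intervalIntegrable (by continuity) _ _)
    (Continuous.intervalIntegrable (by continuity) _ _)]
  have e1 : ∫ x in (0:ℝ)..S, x = S^2/2 := by rw [integral_id]; ring
  have e2 : ∫ x in (0:ℝ)..S, 2*C*x^2 = 2*C*(S^3/3) := by
    rw [intervalIntegral.integral_const_mul, integral_pow]
    norm_num
  rw [e1, e2]; ring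

lemma LCG (γ : Finset ℝ) (hγ : γ.Nonempty) {C S : ℝ} (hC : 0 ≤ C) (hS : 0 < S)
    (hsub : ∀ s : ℝ, 0 < s → s ≤ S^2 →
      volume (Icc (0:ℝ) (1/2) ∩ {x | fE γ x ≤ s}) ≤ ENNReal.ofReal (C * Real.sqrt s)) :
    S^2/2 - (2*C/3)*S^3 ≤ ∫ x in Icc (0:ℝ) (1/2), fE γ x := by
  set μ := volume.restrict (Icc (0:ℝ) (1/2)) with hμ
  haveI hfinμ : IsFiniteMeasure μ := by
    constructor
    rw [hμ, Measure.restrict_apply_univ, Real.volume_Icc]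
    exact ENNReal.ofReal_lt_top
  have hint : Integrable (fE γ) μ := (fE_cont γ hγ).integrableOn_Icc
  have key := hint.integral_eq_integral_meas_lt (Eventually.of_forall (fE_nonneg γ))
  set F : ℝ → ℝ := fun t => (μ {a | t < fE γ a}).toReal with hF
  have hFanti : Antitone F := by
    intro t₁ t₂ h
    apply ENNReal.toReal_mono (measure_ne_top μ _)
    exact measure_mono (fun a ha => lt_of_le_of_lt h ha)
  have hFnn : ∀ t, 0 ≤ F t := fun t => ENNReal.toReal_nonneg
  have hFint : IntegrableOn F (Ioi 0) := by
    constructor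
    · exact (hFanti.measurable).aestronglyMeasurable
    · have heq : ∀ t : ℝ, (‖F t‖₊ : ℝ≥0∞) = μ {a | t < fE γ a} := by
        intro t
        rw [← enorm_eq_nnnorm, Real.enorm_eq_ofReal (hFnn t)]
        exact ENNReal.ofReal_toReal (measure_ne_top μ _)
      unfold HasFiniteIntegral
      calc ∫⁻ t in Ioi 0, (‖F t‖₊ : ℝ≥0∞) = ∫⁻ t in Ioi 0, μ {a | t < fE γ a} := by
            apply lintegral_congr; intro t; rw [heq]
        _ = ∫⁻ ω, ENNReal.ofReal (fE γ ω) ∂μ :=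
            (lintegral_eq_lintegral_meas_lt μ (Eventually.of_forall (fE_nonneg γ))
              hint.aemeasurable).symm
        _ < ⊤ := hint.lintegral_lt_top
  have hmono : ∀ t ∈ Ioc 0 (S^2), 1/2 - C * Real.sqrt t ≤ F t := by
    intro t ht
    have hms : MeasurableSet {a : ℝ | fE γ a ≤ t} :=
      measurableSet_le (fE_cont γ hγ).measurable measurable_const
    have hle : μ {a | fE γ a ≤ t} ≤ ENNReal.ofReal (C * Real.sqrt t) := by
      rw [hμ, Measure.restrict_apply hms, Set.inter_comm]
      exact hsub t ht.1 ht.2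
    have hcompl : {a : ℝ | t < fE γ a} = {a : ℝ | fE γ a ≤ t}ᶜ := by
      ext a; simp [not_le]
    have hms' : MeasurableSet {a : ℝ | fE γ a ≤ t}ᶜ := hms.compl
    have : F t = (μ univ).toReal - (μ {a | fE γ a ≤ t}).toReal := by
      rw [hF]
      simp only
      rw [hcompl, measure_compl hms (measure_ne_top μ _),
        ENNReal.toReal_sub_of_le (measure_mono (subset_univ _)) (measure_ne_top μ _)]
    rw [this]
    have huniv : (μ univ).toReal = 1/2 := by
      rw [hμ, Measure.restrict_apply_univ, Real.volume_Icc]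
      norm_num
    have : (μ {a | fE γ a ≤ t}).toReal ≤ C * Real.sqrt t := by
      apply ENNReal.toReal_le_of_le_ofReal _ hle
      positivity
    linarith
  calc S^2/2 - (2*C/3)*S^3 = ∫ t in Ioc (0:ℝ) (S^2), (1/2 - C * Real.sqrt t) := (sqrtint hS).symm
    _ ≤ ∫ t in Ioc (0:ℝ) (S^2), F t := by
        apply setIntegral_mono_on
          (Continuous.integrableOn_Ioc (by continuity))
          (hFint.mono_set (fun t ht => ht.1))
          measurableSet_Ioc
        exact hmono
    _ ≤ ∫ t in Ioi (0:ℝ), F t := by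
        apply setIntegral_mono_set hFint
          (Eventually.of_forall hFnn)
        exact HasSubset.Subset.eventuallyLE (fun t (ht : t ∈ Ioc 0 (S^2)) => ht.1)
    _ = ∫ x in Icc (0:ℝ) (1/2), fE γ x := key.symm

lemma sb_subset (γ : Finset ℝ) (hγ : γ.Nonempty) {s : ℝ} (hs : 0 ≤ s) :
    Icc (0:ℝ) (1/2) ∩ {x | fE γ x ≤ s} ⊆
      (⋃ c ∈ γ.filter (fun c => c ≤ 1/2), Icc (c - Real.sqrt s) (c + Real.sqrt s)) ∪
      (⋃ c ∈ γ.filter (fun c => 1/2 < c), Icc (c - Real.sqrt s) (1/2)) := by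
  rintro x ⟨hx, hxs⟩
  obtain ⟨c, hc, he⟩ := fE_exists γ hγ x
  simp only [Set.mem_setOf_eq] at hxs
  rw [he] at hxs
  have habs : |x - c| ≤ Real.sqrt s := by
    rw [← Real.sqrt_sq_eq_abs]
    exact Real.sqrt_le_sqrt (by linarith [sq_abs (x - c)])
  rw [abs_le] at habs
  by_cases hcl : c ≤ 1/2
  · left
    exact Set.mem_biUnion (Finset.mem_filter.2 ⟨hc, hcl⟩)
      ⟨by linarith [habs.2], by linarith [habs.1]⟩
  · right
    exact Set.mem_biUnion (Finset.mem_filter.2 ⟨hc, not_le.1 hcl⟩)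
      ⟨by linarith [habs.2], hx.2⟩

lemma sb_left (γ : Finset ℝ) {s : ℝ} (hs : 0 ≤ s) :
    volume (⋃ c ∈ γ.filter (fun c => c ≤ (1:ℝ)/2), Icc (c - Real.sqrt s) (c + Real.sqrt s)) ≤
      ENNReal.ofReal (((γ.filter (fun c => c ≤ (1:ℝ)/2)).card : ℝ) * (2 * Real.sqrt s)) := by
  set L := γ.filter (fun c => c ≤ (1:ℝ)/2)
  calc volume (⋃ c ∈ L, Icc (c - Real.sqrt s) (c + Real.sqrt s))
      ≤ ∑ c ∈ L, volume (Icc (c - Real.sqrt s) (c + Real.sqrt s)) :=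
        measure_biUnion_finset_le L _
    _ = ∑ _c ∈ L, ENNReal.ofReal (2 * Real.sqrt s) := by
        apply Finset.sum_congr rfl
        intro c _
        rw [Real.volume_Icc]
        congr 1
        ring
    _ = (L.card : ℝ≥0∞) * ENNReal.ofReal (2 * Real.sqrt s) := by
        rw [Finset.sum_const, nsmul_eq_mul]
    _ = ENNReal.ofReal ((L.card : ℝ) * (2 * Real.sqrt s)) := by
        rw [ENNReal.ofReal_mul (by positivity : (0:ℝ) ≤ (L.card : ℝ)),
          ENNReal.ofReal_mul (by norm_num : (0:ℝ) ≤ 2), ENNReal.ofReal_natCast]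

lemma sb_right (γ : Finset ℝ) (hR : (γ.filter (fun c => (1:ℝ)/2 < c)).Nonempty) {s : ℝ} (hs : 0 ≤ s) :
    volume (⋃ c ∈ γ.filter (fun c => (1:ℝ)/2 < c), Icc (c - Real.sqrt s) ((1:ℝ)/2)) ≤
      ENNReal.ofReal (1/2 - (γ.filter (fun c => (1:ℝ)/2 < c)).min' hR + Real.sqrt s) := by
  set R := γ.filter (fun c => (1:ℝ)/2 < c)
  set u := R.min' hR
  have hsub : (⋃ c ∈ R, Icc (c - Real.sqrt s) ((1:ℝ)/2)) ⊆ Icc (u - Real.sqrt s) (1/2) := by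
    intro x hx
    simp only [Set.mem_iUnion] at hx
    obtain ⟨c, hc, hx1, hx2⟩ := hx
    exact ⟨by linarith [Finset.min'_le R c hc], hx2⟩
  calc volume (⋃ c ∈ R, Icc (c - Real.sqrt s) ((1:ℝ)/2)) ≤ volume (Icc (u - Real.sqrt s) (1/2)) :=
        measure_mono hsub
    _ = ENNReal.ofReal (1/2 - u + Real.sqrt s) := by rw [Real.volume_Icc]; congr 1; ring

/-- total bound with all points counted fully -/
lemma SB_tot (γ : Finset ℝ) (hγ : γ.Nonempty) {s : ℝ} (hs : 0 < s) :
    volume (Icc (0:ℝ) (1/2) ∩ {x | fE γ x ≤ s}) ≤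
      ENNReal.ofReal ((γ.card : ℝ) * (2 * Real.sqrt s)) := by
  calc volume (Icc (0:ℝ) (1/2) ∩ {x | fE γ x ≤ s})
      ≤ volume (⋃ c ∈ γ, Icc (c - Real.sqrt s) (c + Real.sqrt s)) :=
        measure_mono ((Set.inter_subset_right).trans (fE_sublevel γ hγ s))
    _ ≤ ∑ c ∈ γ, volume (Icc (c - Real.sqrt s) (c + Real.sqrt s)) := measure_biUnion_finset_le γ _
    _ = ∑ _c ∈ γ, ENNReal.ofReal (2 * Real.sqrt s) := by
        apply Finset.sum_congr rfl
        intro c _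
        rw [Real.volume_Icc]
        congr 1
        ring
    _ = (γ.card : ℝ≥0∞) * ENNReal.ofReal (2 * Real.sqrt s) := by
        rw [Finset.sum_const, nsmul_eq_mul]
    _ = ENNReal.ofReal ((γ.card : ℝ) * (2 * Real.sqrt s)) := by
        rw [ENNReal.ofReal_mul (by positivity : (0:ℝ) ≤ (γ.card : ℝ)),
          ENNReal.ofReal_natCast]

/-- bound counting left points fully and all right points as one extra -/
lemma SB_all (γ : Finset ℝ) (hγ : γ.Nonempty) {s : ℝ} (hs : 0 < s) :
    volume (Icc (0:ℝ) (1/2) ∩ {x | fE γ x ≤ s}) ≤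
      ENNReal.ofReal ((2 * ((γ.filter (fun c => c ≤ (1:ℝ)/2)).card : ℝ) + 1) * Real.sqrt s) := by
  rcases Finset.eq_empty_or_nonempty (γ.filter (fun c => (1:ℝ)/2 < c)) with hR | hR
  · calc volume (Icc (0:ℝ) (1/2) ∩ {x | fE γ x ≤ s})
        ≤ ENNReal.ofReal (((γ.filter (fun c => c ≤ (1:ℝ)/2)).card : ℝ) * (2 * Real.sqrt s)) := by
          refine le_trans (measure_mono ((sb_subset γ hγ hs.le).trans ?_)) (sb_left γ hs.le)
          rw [hR]
          simp
      _ ≤ _ := by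
          apply ENNReal.ofReal_le_ofReal
          have := Real.sqrt_nonneg s
          nlinarith
  · have hu : (1:ℝ)/2 < (γ.filter (fun c => (1:ℝ)/2 < c)).min' hR := by
      have := (γ.filter (fun c => (1:ℝ)/2 < c)).min'_mem hR
      exact (Finset.mem_filter.1 this).2
    calc volume (Icc (0:ℝ) (1/2) ∩ {x | fE γ x ≤ s})
        ≤ volume (⋃ c ∈ γ.filter (fun c => c ≤ (1:ℝ)/2),
            Icc (c - Real.sqrt s) (c + Real.sqrt s)) +
          volume (⋃ c ∈ γ.filter (fun c => (1:ℝ)/2 < c), Icc (c - Real.sqrt s) ((1:ℝ)/2)) :=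
          le_trans (measure_mono (sb_subset γ hγ hs.le)) (measure_union_le _ _)
      _ ≤ ENNReal.ofReal (((γ.filter (fun c => c ≤ (1:ℝ)/2)).card : ℝ) * (2 * Real.sqrt s)) +
          ENNReal.ofReal (1/2 - (γ.filter (fun c => (1:ℝ)/2 < c)).min' hR + Real.sqrt s) :=
          add_le_add (sb_left γ hs.le) (sb_right γ hR hs.le)
      _ ≤ ENNReal.ofReal (((γ.filter (fun c => c ≤ (1:ℝ)/2)).card : ℝ) * (2 * Real.sqrt s)) +
          ENNReal.ofReal (Real.sqrt s) := by
          apply add_le_add le_rfl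
          apply ENNReal.ofReal_le_ofReal
          linarith
      _ = _ := by
          rw [← ENNReal.ofReal_add (by positivity) (by positivity)]
          congr 1
          ring

/-- truncated bound: right points do not matter for s ≤ (min' - 1/2)^2 -/
lemma SB_trunc (γ : Finset ℝ) (hγ : γ.Nonempty)
    (hR : (γ.filter (fun c => (1:ℝ)/2 < c)).Nonempty) {s : ℝ} (hs : 0 < s)
    (hst : Real.sqrt s ≤ (γ.filter (fun c => (1:ℝ)/2 < c)).min' hR - 1/2) :
    volume (Icc (0:ℝ) (1/2) ∩ {x | fE γ x ≤ s}) ≤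
      ENNReal.ofReal (2 * ((γ.filter (fun c => c ≤ (1:ℝ)/2)).card : ℝ) * Real.sqrt s) := by
  calc volume (Icc (0:ℝ) (1/2) ∩ {x | fE γ x ≤ s})
      ≤ volume (⋃ c ∈ γ.filter (fun c => c ≤ (1:ℝ)/2),
          Icc (c - Real.sqrt s) (c + Real.sqrt s)) +
        volume (⋃ c ∈ γ.filter (fun c => (1:ℝ)/2 < c), Icc (c - Real.sqrt s) ((1:ℝ)/2)) :=
        le_trans (measure_mono (sb_subset γ hγ hs.le)) (measure_union_le _ _)
    _ ≤ ENNReal.ofReal (((γ.filter (fun c => c ≤ (1:ℝ)/2)).card : ℝ) * (2 * Real.sqrt s)) + 0 := by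
        apply add_le_add (sb_left γ hs.le)
        refine le_trans (sb_right γ hR hs.le) ?_
        simp only [nonpos_iff_eq_zero, ENNReal.ofReal_eq_zero]
        linarith
    _ = ENNReal.ofReal (2 * ((γ.filter (fun c => c ≤ (1:ℝ)/2)).card : ℝ) * Real.sqrt s) := by
        rw [add_zero]
        congr 1
        ring

lemma atom0 (γ : Finset ℝ) (hγ : γ.Nonempty)
    (hR : γ.filter (fun c => (1:ℝ)/2 < c) = ∅) :
    1/36 ≤ fE γ (2/3) := by
  obtain ⟨c, hc, he⟩ := fE_exists γ hγ (2/3)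
  have hcl : c ≤ 1/2 := by
    by_contra h
    have : c ∈ γ.filter (fun c => (1:ℝ)/2 < c) := Finset.mem_filter.2 ⟨hc, not_le.1 h⟩
    rw [hR] at this
    exact absurd this (Finset.notMem_empty c)
  rw [he]
  nlinarith

lemma atomPigeon (γ : Finset ℝ) (hγ : γ.Nonempty)
    (hR : (γ.filter (fun c => (1:ℝ)/2 < c)).card ≤ 2) :
    1/72 ≤ fE γ (2/3) + fE γ (5/6) + fE γ 1 := by
  obtain ⟨c₁, hc₁, he₁⟩ := fE_exists γ hγ (2/3)
  obtain ⟨c₂, hc₂, he₂⟩ := fE_exists γ hγ (5/6)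
  obtain ⟨c₃, hc₃, he₃⟩ := fE_exists γ hγ 1
  have h1 := fE_nonneg γ (2/3); have h2 := fE_nonneg γ (5/6); have h3 := fE_nonneg γ 1
  set R := γ.filter (fun c => (1:ℝ)/2 < c) with hRdef
  by_cases hl1 : c₁ ≤ 1/2
  · rw [he₁] at *; nlinarith
  by_cases hl2 : c₂ ≤ 1/2
  · rw [he₂] at *; nlinarith
  by_cases hl3 : c₃ ≤ 1/2
  · rw [he₃] at *; nlinarith
  have hm1 : c₁ ∈ R := Finset.mem_filter.2 ⟨hc₁, not_le.1 hl1⟩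
  have hm2 : c₂ ∈ R := Finset.mem_filter.2 ⟨hc₂, not_le.1 hl2⟩
  have hm3 : c₃ ∈ R := Finset.mem_filter.2 ⟨hc₃, not_le.1 hl3⟩
  have hcoll : c₁ = c₂ ∨ c₁ = c₃ ∨ c₂ = c₃ := by
    by_contra h
    push_neg at h
    obtain ⟨h12, h13, h23⟩ := h
    have hsub : ({c₁, c₂, c₃} : Finset ℝ) ⊆ R := by
      intro x hx
      simp only [Finset.mem_insert, Finset.mem_singleton] at hx
      rcases hx with rfl | rfl | rfl <;> assumption
    have : ({c₁, c₂, c₃} : Finset ℝ).card = 3 := by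
      rw [Finset.card_insert_of_notMem (by simp [h12, h13]),
        Finset.card_insert_of_notMem (by simp [h23]), Finset.card_singleton]
    have := Finset.card_le_card hsub
    omega
  rcases hcoll with h | h | h
  · subst h; rw [he₁, he₂] at *; nlinarith [sq_nonneg (c₁ - 3/4)]
  · subst h; rw [he₁, he₃] at *; nlinarith [sq_nonneg (c₁ - 5/6)]
  · subst h; rw [he₂, he₃] at *; nlinarith [sq_nonneg (c₂ - 11/12)]

set_option maxHeartbeats 1000000 in
lemma atom3 (γ : Finset ℝ) (hγ : γ.Nonempty)
    (hR : (γ.filter (fun c => (1:ℝ)/2 < c)).card = 3)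
    (hRne : (γ.filter (fun c => (1:ℝ)/2 < c)).Nonempty) :
    min (((γ.filter (fun c => (1:ℝ)/2 < c)).min' hRne - 2/3)^2) (1/144) ≤
      fE γ (2/3) + fE γ (5/6) + fE γ 1 := by
  set R := γ.filter (fun c => (1:ℝ)/2 < c) with hRdef
  set u := R.min' hRne with hu
  obtain ⟨c₁, hc₁, he₁⟩ := fE_exists γ hγ (2/3)
  obtain ⟨c₂, hc₂, he₂⟩ := fE_exists γ hγ (5/6)
  obtain ⟨c₃, hc₃, he₃⟩ := fE_exists γ hγ 1
  have h1 := fE_nonneg γ (2/3); have h2 := fE_nonneg γ (5/6); have h3 := fE_nonneg γ 1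
  have hmin : ∀ r : ℝ, 1/144 ≤ r → min ((u - 2/3)^2) (1/144) ≤ r :=
    fun r hr => le_trans (min_le_right _ _) hr
  by_cases hl1 : c₁ ≤ 1/2
  · apply hmin; rw [he₁] at *; nlinarith
  have hm1 : c₁ ∈ R := Finset.mem_filter.2 ⟨hc₁, not_le.1 hl1⟩
  by_cases hc1u : c₁ = u
  · refine le_trans (min_le_left _ _) ?_
    rw [he₁] at *
    subst hc1u
    nlinarith
  by_cases hbig : 1/144 ≤ (2/3 - c₁)^2
  · apply hmin; rw [he₁] at *; nlinarith
  push_neg at hbig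
  have hc134 : c₁ < 3/4 := by nlinarith
  have hu12 : 1/2 < u := (Finset.mem_filter.1 (R.min'_mem hRne)).2
  have huc1 : u ≤ c₁ := R.min'_le c₁ hm1
  -- third element w
  have hcard2 : ((R.erase u).erase c₁).card = 1 := by
    rw [Finset.card_erase_of_mem (Finset.mem_erase.2 ⟨hc1u, hm1⟩),
      Finset.card_erase_of_mem (R.min'_mem hRne), hR]
  obtain ⟨w, hw⟩ := Finset.card_eq_one.1 hcard2
  have hclassify : ∀ c, c ∈ R → c ≠ w → c = u ∨ c = c₁ := by
    intro c hcR hcw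
    by_contra h
    push_neg at h
    have : c ∈ (R.erase u).erase c₁ :=
      Finset.mem_erase.2 ⟨h.2, Finset.mem_erase.2 ⟨h.1, hcR⟩⟩
    rw [hw] at this
    exact hcw (Finset.mem_singleton.1 this)
  have hfloor2 : ∀ c, c ∈ γ → c ≠ w → 1/144 ≤ (5/6 - c)^2 := by
    intro c hcg hcw
    by_cases hcl : c ≤ 1/2
    · nlinarith
    · rcases hclassify c (Finset.mem_filter.2 ⟨hcg, not_le.1 hcl⟩) hcw with rfl | rfl
      · nlinarith
      · nlinarith
  have hfloor3 : ∀ c, c ∈ γ → c ≠ w → 1/144 ≤ (1 - c)^2 := by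
    intro c hcg hcw
    by_cases hcl : c ≤ 1/2
    · nlinarith
    · rcases hclassify c (Finset.mem_filter.2 ⟨hcg, not_le.1 hcl⟩) hcw with rfl | rfl
      · nlinarith
      · nlinarith
  by_cases hw2 : c₂ = w
  · by_cases hw3 : c₃ = w
    · -- both served by w
      apply hmin
      have e2 : fE γ (5/6) = (5/6 - w)^2 := by rw [he₂, hw2]
      have e3 : fE γ 1 = (1 - w)^2 := by rw [he₃, hw3]
      rw [e2, e3]
      nlinarith [sq_nonneg (w - 11/12)]
    · apply hmin
      have hf := hfloor3 c₃ hc₃ hw3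
      rw [he₃]
      linarith
  · apply hmin
    have hf := hfloor2 c₂ hc₂ hw2
    rw [he₂]
    linarith

lemma EI_nonneg (γ : Finset ℝ) : 0 ≤ ∫ x in Icc (0:ℝ) (1/2), fE γ x :=
  setIntegral_nonneg measurableSet_Icc (fun x _ => fE_nonneg γ x)

lemma EI_of_all (γ : Finset ℝ) (hγ : γ.Nonempty) {C : ℝ}
    (hk : 2 * ((γ.filter (fun c => c ≤ (1:ℝ)/2)).card : ℝ) + 1 ≤ C) :
    1/(24*C^2) ≤ ∫ x in Icc (0:ℝ) (1/2), fE γ x := by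
  have hC : (0:ℝ) < C := lt_of_lt_of_le (by positivity) hk
  have key := LCG γ hγ (C := C) (S := 1/(2*C)) hC.le (by positivity) ?_
  · have : (1/(2*C))^2/2 - (2*C/3)*(1/(2*C))^3 = 1/(24*C^2) := by
      field_simp
      ring
    linarith [key, this]
  · intro s hs hsS
    refine le_trans (SB_all γ hγ hs) (ENNReal.ofReal_le_ofReal ?_)
    have := Real.sqrt_nonneg s
    nlinarith

lemma EI_of_trunc (γ : Finset ℝ) (hγ : γ.Nonempty)
    (hR : (γ.filter (fun c => (1:ℝ)/2 < c)).Nonempty) {C S : ℝ}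
    (hk : 2 * ((γ.filter (fun c => c ≤ (1:ℝ)/2)).card : ℝ) ≤ C) (hS : 0 < S)
    (hCS : C * S ≤ 1/2)
    (hSt : S ≤ (γ.filter (fun c => (1:ℝ)/2 < c)).min' hR - 1/2) :
    S^2/2 - (2*C/3)*S^3 ≤ ∫ x in Icc (0:ℝ) (1/2), fE γ x := by
  have hC : (0:ℝ) ≤ C := le_trans (by positivity) hk
  refine LCG γ hγ hC hS ?_
  intro s hs hsS
  have hsqrt : Real.sqrt s ≤ S := by
    rw [show S = Real.sqrt (S^2) by rw [Real.sqrt_sq hS.le]]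
    exact Real.sqrt_le_sqrt hsS
  refine le_trans (SB_trunc γ hγ hR hs (le_trans hsqrt hSt)) (ENNReal.ofReal_le_ofReal ?_)
  have := Real.sqrt_nonneg s
  nlinarith

set_option maxHeartbeats 2000000 in
theorem lowerMix (m : ℕ) (hm : 2 ≤ m) (γ : Finset ℝ) (hγ : γ.Nonempty)
    (hcard : γ.card ≤ m + 3) :
    1/(96 * (m:ℝ)^2) ≤
      (∫ x in Icc (0:ℝ) (1/2), fE γ x) + (1/6) * (fE γ (2/3) + fE γ (5/6) + fE γ 1) := by
  have hM : (2:ℝ) ≤ (m:ℝ) := by exact_mod_cast hm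
  have hMpos : (0:ℝ) < (m:ℝ) := by linarith
  set k := (γ.filter (fun c => c ≤ (1:ℝ)/2)).card with hk
  set ρ := (γ.filter (fun c => (1:ℝ)/2 < c)).card with hρ
  have hkρ : k + ρ = γ.card := by
    rw [hk, hρ]
    have := γ.card_filter_add_card_filter_not (p := fun c => c ≤ (1:ℝ)/2)
    rw [← this]
    congr 1
    apply Finset.card_bij (fun a _ => a) <;> intros <;> simp_all [not_le]
  have hEI := EI_nonneg γ
  have hA1 := fE_nonneg γ (2/3); have hA2 := fE_nonneg γ (5/6); have hA3 := fE_nonneg γ 1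
  by_cases hρ0 : ρ = 0
  · -- no right points
    have hRe : γ.filter (fun c => (1:ℝ)/2 < c) = ∅ := Finset.card_eq_zero.1 hρ0
    have := atom0 γ hγ hRe
    have hT : 1/(96 * (m:ℝ)^2) ≤ 1/216 := by
      rw [div_le_div_iff₀ (by positivity) (by norm_num)]
      nlinarith
    linarith
  by_cases hkm : k + 1 ≤ m
  · -- few left points: treat one right point as free
    have hEIb : 1/(24*(2*(m:ℝ)-1)^2) ≤ ∫ x in Icc (0:ℝ) (1/2), fE γ x := by
      apply EI_of_all γ hγ
      have : (k:ℝ) ≤ (m:ℝ) - 1 := by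
        have : (k:ℝ) + 1 ≤ (m:ℝ) := by exact_mod_cast hkm
        linarith
      linarith
    have hT : 1/(96 * (m:ℝ)^2) ≤ 1/(24*(2*(m:ℝ)-1)^2) := by
      rw [div_le_div_iff₀ (by positivity) (by nlinarith)]
      nlinarith
    linarith
  -- now k ≥ m, so ρ ≤ 3
  have hkm' : m ≤ k := by omega
  have hρ3 : ρ ≤ 3 := by omega
  by_cases hρ2 : ρ ≤ 2
  · -- one or two right points: pigeonhole
    have hD := atomPigeon γ hγ (by omega)
    by_cases hm3 : 3 ≤ m
    · have hM3 : (3:ℝ) ≤ (m:ℝ) := by exact_mod_cast hm3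
      have hT : 1/(96 * (m:ℝ)^2) ≤ 1/432 := by
        rw [div_le_div_iff₀ (by positivity) (by norm_num)]
        nlinarith
      linarith
    · -- m = 2
      have hm2 : m = 2 := by omega
      have hk4 : k ≤ 4 := by omega
      have hEIb : 1/1944 ≤ ∫ x in Icc (0:ℝ) (1/2), fE γ x := by
        have := EI_of_all γ hγ (C := 9) (by
          have : (k:ℝ) ≤ 4 := by exact_mod_cast hk4
          linarith)
        norm_num at this ⊢
        linarith
      rw [hm2]
      norm_num
      linarith
  · -- ρ = 3 and k = m
    have hρeq : ρ = 3 := by omega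
    have hkeq : k = m := by omega
    have hRne : (γ.filter (fun c => (1:ℝ)/2 < c)).Nonempty := by
      rw [← Finset.card_pos, ← hρ, hρeq]; norm_num
    set u := (γ.filter (fun c => (1:ℝ)/2 < c)).min' hRne with hudef
    have hu12 : 1/2 < u := (Finset.mem_filter.1
      ((γ.filter (fun c => (1:ℝ)/2 < c)).min'_mem hRne)).2
    have hD := atom3 γ hγ (by rw [← hρ]; exact hρeq) hRne
    rw [← hudef] at hD
    have hkR : (k:ℝ) = (m:ℝ) := by exact_mod_cast hkeq
    by_cases h4a : 1/(4*(m:ℝ)) ≤ u - 1/2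
    · -- inactive right points
      have hEIb := EI_of_trunc γ hγ hRne (C := 2*(m:ℝ)) (S := 1/(4*(m:ℝ)))
        (by rw [hkR]) (by positivity) (by
          have h2 : 2*(m:ℝ) * (1/(4*(m:ℝ))) = 1/2 := by field_simp; ring
          linarith) h4a
      have heq : (1/(4*(m:ℝ)))^2/2 - (2*(2*(m:ℝ))/3)*(1/(4*(m:ℝ)))^3 = 1/(96*(m:ℝ)^2) := by
        field_simp
        ring
      linarith
    · push_neg at h4a
      by_cases hm3 : 3 ≤ m
      · -- m ≥ 3 : atom contribution 1/144 suffices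
        have hM3 : (3:ℝ) ≤ (m:ℝ) := by exact_mod_cast hm3
        have ht12 : u - 1/2 < 1/12 := by
          have : 1/(4*(m:ℝ)) ≤ 1/12 := by
            rw [div_le_div_iff₀ (by positivity) (by norm_num)]
            linarith
          linarith
        have hmin : (1:ℝ)/144 ≤ min ((u - 2/3)^2) (1/144) := by
          apply le_min _ le_rfl
          nlinarith
        have hT : 1/(96 * (m:ℝ)^2) ≤ 1/864 := by
          rw [div_le_div_iff₀ (by positivity) (by norm_num)]
          nlinarith
        linarith
      · -- m = 2
        have hm2 : m = 2 := by omega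
        have hM2 : (m:ℝ) = 2 := by rw [hm2]; norm_num
        rw [hM2] at h4a hkR ⊢
        norm_num at h4a ⊢
        by_cases ht : u - 1/2 ≤ 1/12
        · -- small t : use five-point bound
          have hEIb : 1/600 ≤ ∫ x in Icc (0:ℝ) (1/2), fE γ x := by
            have := EI_of_all γ hγ (C := 5) (by rw [hkR]; norm_num)
            norm_num at this ⊢
            linarith
          have hmin : (1:ℝ)/144 ≤ min ((u - 2/3)^2) (1/144) := by
            apply le_min _ le_rfl
            nlinarith
          nlinarith
        · -- medium t
          push_neg at ht
          have hEIb := EI_of_trunc γ hγ hRne (C := 4) (S := u - 1/2)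
            (by rw [hkR]; norm_num) (by linarith) (by linarith) (by rw [← hudef])
          have hmin : ((2:ℝ)/3 - u)^2 ≤ min ((u - 2/3)^2) (1/144) := by
            refine le_min (le_of_eq (by ring)) (by nlinarith)
          nlinarith [hD, hEIb, hmin, sq_nonneg (u - 7/12),
            mul_nonneg (sub_nonneg.2 h4a.le) (sq_nonneg (u - 7/12))]

lemma cell_integral (g a b : ℝ) : ∫ x in a..b, (x - g)^2 = ((b-g)^3 - (a-g)^3)/3 := by
  have h : ∀ x ∈ uIcc a b, HasDerivAt (fun y => (y - g)^3/3) ((x - g)^2) x := by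
    intro x _
    have h1 : HasDerivAt (fun y : ℝ => y - g) 1 x := (hasDerivAt_id x).sub_const g
    have h3 : HasDerivAt (fun y => (y - g)^3/3) (((3:ℕ):ℝ) * (x - g)^(3-1) * 1 / 3) x :=
      (h1.pow 3).div_const 3
    convert h3 using 1
    simp
  rw [intervalIntegral.integral_eq_sub_of_hasDerivAt h
    (Continuous.intervalIntegrable (by continuity) _ _)]
  ring

lemma EI_upper (m : ℕ) (hm : 2 ≤ m) (γ : Finset ℝ) (hγ : γ.Nonempty)
    (hgrid : ∀ i, i < m → ((2*(i:ℝ)+1)/(4*(m:ℝ))) ∈ γ) :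
    ∫ x in Icc (0:ℝ) (1/2), fE γ x ≤ 1/(96*(m:ℝ)^2) := by
  have hMpos : (0:ℝ) < (m:ℝ) := by
    have : (2:ℝ) ≤ (m:ℝ) := by exact_mod_cast hm
    linarith
  set a : ℕ → ℝ := fun i => (i:ℝ)/(2*(m:ℝ)) with ha
  have hint : ∀ i, IntervalIntegrable (fE γ) volume (a i) (a (i+1)) :=
    fun i => (fE_cont γ hγ).intervalIntegrable _ _
  have hsum := intervalIntegral.sum_integral_adjacent_intervals
    (a := a) (n := m) (fun i _ => hint i)
  have ha0 : a 0 = 0 := by simp [ha]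
  have ham : a m = 1/2 := by
    rw [ha]
    field_simp
  have hEIeq : ∫ x in Icc (0:ℝ) (1/2), fE γ x = ∑ i ∈ Finset.range m,
      ∫ x in (a i)..(a (i+1)), fE γ x := by
    rw [hsum, ha0, ham, integral_Icc_eq_integral_Ioc,
      ← intervalIntegral.integral_of_le (by norm_num : (0:ℝ) ≤ 1/2)]
  rw [hEIeq]
  have hbound : ∀ i ∈ Finset.range m,
      ∫ x in (a i)..(a (i+1)), fE γ x ≤ 1/(96*(m:ℝ)^3) := by
    intro i hi
    have him : i < m := Finset.mem_range.1 hi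
    set g : ℝ := (2*(i:ℝ)+1)/(4*(m:ℝ)) with hg
    have hab : a i ≤ a (i+1) := by
      rw [ha]
      apply div_le_div_of_nonneg_right _ (by linarith)
      · push_cast; linarith
    have hmono : ∫ x in (a i)..(a (i+1)), fE γ x ≤ ∫ x in (a i)..(a (i+1)), (x - g)^2 := by
      apply intervalIntegral.integral_mono_on hab (hint i)
        (Continuous.intervalIntegrable (by continuity) _ _)
      intro x _
      exact fE_le γ hγ (hgrid i him) x
    have he1 : a (i+1) - g = 1/(4*(m:ℝ)) := by
      rw [ha, hg]
      field_simp
      push_cast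
      ring
    have he2 : a i - g = -(1/(4*(m:ℝ))) := by
      rw [ha, hg]
      field_simp
      ring
    have hc : ∫ x in (a i)..(a (i+1)), (x - g)^2 = 1/(96*(m:ℝ)^3) := by
      rw [cell_integral, he1, he2]
      field_simp
      ring
    linarith
  calc ∑ i ∈ Finset.range m, ∫ x in (a i)..(a (i+1)), fE γ x
      ≤ ∑ _i ∈ Finset.range m, 1/(96*(m:ℝ)^3) := Finset.sum_le_sum hbound
    _ = (m:ℝ) * (1/(96*(m:ℝ)^3)) := by rw [Finset.sum_const, Finset.card_range, nsmul_eq_mul]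
    _ = 1/(96*(m:ℝ)^2) := by field_simp

lemma EI_lower_simple (m : ℕ) (hm : 2 ≤ m) (γ : Finset ℝ) (hγ : γ.Nonempty)
    (hcard : γ.card ≤ m) :
    1/(96*(m:ℝ)^2) ≤ ∫ x in Icc (0:ℝ) (1/2), fE γ x := by
  have hMpos : (0:ℝ) < (m:ℝ) := by
    have : (2:ℝ) ≤ (m:ℝ) := by exact_mod_cast hm
    linarith
  have key := LCG γ hγ (C := 2*(m:ℝ)) (S := 1/(4*(m:ℝ))) (by positivity) (by positivity) ?_
  · have heq : (1/(4*(m:ℝ)))^2/2 - (2*(2*(m:ℝ))/3)*(1/(4*(m:ℝ)))^3 = 1/(96*(m:ℝ)^2) := by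
      field_simp
      ring
    linarith
  · intro s hs hsS
    refine le_trans (SB_tot γ hγ hs) (ENNReal.ofReal_le_ofReal ?_)
    have h1 : (γ.card : ℝ) ≤ (m:ℝ) := by exact_mod_cast hcard
    have := Real.sqrt_nonneg s
    nlinarith


theorem stmt5 (P : Measure ℝ) (hP : P = mix (unif 0 (1/2)) discD)
    (n : ℕ) (hn : 5 ≤ n) :
    IsOptimalSet P n
      ((Finset.image (fun i : ℕ => (2 * (i : ℝ) + 1) / (4 * ((n : ℝ) - 3)))
          (Finset.range (n - 3))) ∪ ({2/3, 5/6, 1} : Finset ℝ)) ∧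
    quantErr P n = (1/2) * quantErr (unif 0 (1/2)) (n - 3) ∧
    quantErr P n = 1 / (96 * ((n : ℝ) - 3) ^ 2) := by
  have hm : 2 ≤ n - 3 := by omega
  set m : ℕ := n - 3 with hmdef
  have hMpos : (0:ℝ) < (m:ℝ) := by
    have : (2:ℝ) ≤ (m:ℝ) := by exact_mod_cast hm
    linarith
  have hcast : ((n:ℝ) - 3) = (m:ℝ) := by
    rw [hmdef]
    push_cast [Nat.cast_sub (by omega : 3 ≤ n)]
    ring
  set γstar : Finset ℝ := (Finset.image (fun i : ℕ => (2 * (i : ℝ) + 1) / (4 * ((n : ℝ) - 3)))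
      (Finset.range (n - 3))) ∪ ({2/3, 5/6, 1} : Finset ℝ) with hγstar
  have hne : γstar.Nonempty := by
    refine ⟨1, ?_⟩
    rw [hγstar]
    apply Finset.mem_union_right
    simp
  have hatom_mem : (2/3 : ℝ) ∈ γstar ∧ (5/6 : ℝ) ∈ γstar ∧ (1 : ℝ) ∈ γstar := by
    refine ⟨?_, ?_, ?_⟩ <;> (rw [hγstar]; apply Finset.mem_union_right; simp)
  have hcards : γstar.card ≤ n := by
    rw [hγstar]
    refine le_trans (Finset.card_union_le _ _) ?_
    have h1 : (Finset.image (fun i : ℕ => (2 * (i : ℝ) + 1) / (4 * ((n : ℝ) - 3)))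
        (Finset.range (n - 3))).card ≤ n - 3 := by
      refine le_trans (Finset.card_image_le) ?_
      rw [Finset.card_range]
    have h2 : ({2/3, 5/6, 1} : Finset ℝ).card ≤ 3 := by
      refine le_trans (Finset.card_insert_le _ _) ?_
      refine Nat.succ_le_succ (le_trans (Finset.card_insert_le _ _) ?_)
      simp
    exact le_trans (Nat.add_le_add h1 h2) (by omega)
  have hgrid_mem : ∀ i, i < m → ((2*(i:ℝ)+1)/(4*(m:ℝ))) ∈ γstar := by
    intro i hi
    rw [hγstar]
    apply Finset.mem_union_left
    rw [← hcast]
    exact Finset.mem_image_of_mem _ (Finset.mem_range.2 hi)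
  have hatoms : fE γstar (2/3) = 0 ∧ fE γstar (5/6) = 0 ∧ fE γstar 1 = 0 := by
    refine ⟨?_, ?_, ?_⟩ <;>
      [ (have := fE_le γstar hne hatom_mem.1 (2/3));
        (have := fE_le γstar hne hatom_mem.2.1 (5/6));
        (have := fE_le γstar hne hatom_mem.2.2 1) ] <;>
      (refine le_antisymm (le_trans this (by norm_num)) (fE_nonneg _ _))
  have hupper : distortion P γstar ≤ 1/(96*(m:ℝ)^2) := by
    rw [hP, distortion_mix γstar hne, hatoms.1, hatoms.2.1, hatoms.2.2]
    have := EI_upper m hm γstar hne hgrid_mem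
    linarith
  have hlowall : ∀ γ : Finset ℝ, γ.Nonempty → γ.card ≤ n →
      1/(96*(m:ℝ)^2) ≤ distortion P γ := by
    intro γ h1 h2
    rw [hP, distortion_mix γ h1]
    exact lowerMix m hm γ h1 (by omega)
  -- quantErr for P
  have hmem : distortion P γstar ∈
      {v : ℝ | ∃ γ : Finset ℝ, γ.Nonempty ∧ γ.card ≤ n ∧ v = distortion P γ} :=
    ⟨γstar, hne, hcards, rfl⟩
  have hlb : ∀ v ∈ {v : ℝ | ∃ γ : Finset ℝ, γ.Nonempty ∧ γ.card ≤ n ∧ v = distortion P γ},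
      1/(96*(m:ℝ)^2) ≤ v := by
    rintro v ⟨γ, h1, h2, rfl⟩
    exact hlowall γ h1 h2
  have hq : quantErr P n = 1/(96*(m:ℝ)^2) := by
    refine le_antisymm (le_trans (csInf_le ⟨_, hlb⟩ hmem) hupper) (le_csInf ⟨_, hmem⟩ hlb)
  have hdiststar : distortion P γstar = 1/(96*(m:ℝ)^2) :=
    le_antisymm hupper (hlowall γstar hne hcards)
  -- quantErr for unif
  set γgrid : Finset ℝ := Finset.image (fun i : ℕ => (2*(i:ℝ)+1)/(4*(m:ℝ)))
    (Finset.range m) with hγgrid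
  have hgne : γgrid.Nonempty := by
    rw [hγgrid]
    apply Finset.Nonempty.image
    exact ⟨0, Finset.mem_range.2 (by omega)⟩
  have hgcard : γgrid.card ≤ m := by
    rw [hγgrid]
    exact le_trans Finset.card_image_le (by rw [Finset.card_range])
  have hggrid : ∀ i, i < m → ((2*(i:ℝ)+1)/(4*(m:ℝ))) ∈ γgrid := by
    intro i hi
    rw [hγgrid]
    exact Finset.mem_image_of_mem _ (Finset.mem_range.2 hi)
  have hgupper : distortion (unif 0 (1/2)) γgrid ≤ 1/(48*(m:ℝ)^2) := by
    rw [distortion_unif γgrid hgne]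
    have := EI_upper m hm γgrid hgne hggrid
    have heq : 2 * (1/(96*(m:ℝ)^2)) = 1/(48*(m:ℝ)^2) := by
      field_simp; ring
    linarith
  have hglow : ∀ γ : Finset ℝ, γ.Nonempty → γ.card ≤ m →
      1/(48*(m:ℝ)^2) ≤ distortion (unif 0 (1/2)) γ := by
    intro γ h1 h2
    rw [distortion_unif γ h1]
    have := EI_lower_simple m hm γ h1 h2
    have heq : 2 * (1/(96*(m:ℝ)^2)) = 1/(48*(m:ℝ)^2) := by
      field_simp; ring
    linarith
  have hgmem : distortion (unif 0 (1/2)) γgrid ∈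
      {v : ℝ | ∃ γ : Finset ℝ, γ.Nonempty ∧ γ.card ≤ m ∧ v = distortion (unif 0 (1/2)) γ} :=
    ⟨γgrid, hgne, hgcard, rfl⟩
  have hglb : ∀ v ∈ {v : ℝ | ∃ γ : Finset ℝ, γ.Nonempty ∧ γ.card ≤ m ∧
      v = distortion (unif 0 (1/2)) γ}, 1/(48*(m:ℝ)^2) ≤ v := by
    rintro v ⟨γ, h1, h2, rfl⟩
    exact hglow γ h1 h2
  have hgq : quantErr (unif 0 (1/2)) m = 1/(48*(m:ℝ)^2) := by
    refine le_antisymm (le_trans (csInf_le ⟨_, hglb⟩ hgmem) hgupper) (le_csInf ⟨_, hgmem⟩ hglb)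
  refine ⟨⟨hne, hcards, by rw [hdiststar, hq]⟩, ?_, ?_⟩
  · rw [hq, hgq]
    ring
  · rw [hq, hcast]
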